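/- Let U ⊆ ℝ² be a bounded measurable set and f : U → ℝ measurable. Suppose there exist constants A > 0, h > 1, and an integer m ∈ {0,1} such that for all t ∈ (0, 1/2), the Lebesgue measure of {x ∈ U : |f(x)| ≤ t} is at most A t^{1/h} |log t|^m. Then there is a constant C > 0 such that for every bounded measurable a : U → ℝ and every λ ≥ 2, ∫_{{x ∈ U : |f(x)| ≥ 1/λ}} |a(x)| / (1 + λ|f(x)|) dx ≤ C ‖a‖_∞ (log λ)^m / λ^{1/h}. -/

import Mathlib

open MeasureTheory Real Set

set_option maxHeartbeats 1000000 in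
theorem stmt_10 (U : Set (ℝ × ℝ)) (hU : MeasurableSet U) (hUb : Bornology.IsBounded U)
    (f : ℝ × ℝ → ℝ) (hf : Measurable f)
    (A h : ℝ) (m : ℕ) (hA : 0 < A) (hh : 1 < h) (hm : m = 0 ∨ m = 1)
    (hsub : ∀ t ∈ Ioo (0:ℝ) (1/2),
      (volume {x ∈ U | |f x| ≤ t}).toReal ≤ A * t ^ (1/h) * |Real.log t| ^ m) :
    ∃ C > 0, ∀ (a : ℝ × ℝ → ℝ) (M : ℝ), Measurable a → (∀ x, |a x| ≤ M) →
      ∀ L : ℝ, 2 ≤ L →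
        ∫ x in {x ∈ U | 1/L ≤ |f x|}, |a x| / (1 + L * |f x|)
          ≤ C * M * (Real.log L) ^ m / L ^ (1/h) := by
  have h2 : (0:ℝ) < 2 := by norm_num
  have hh0 : (0:ℝ) < h := lt_trans one_pos hh
  have hinvh_pos : 0 < 1/h := by positivity
  have hinvh_lt1 : 1/h < 1 := by rw [div_lt_one hh0]; exact hh
  have hUfin : volume U < ⊤ := hUb.measure_lt_top
  set V : ℝ := (volume U).toReal with hVdef
  have hV0 : 0 ≤ V := ENNReal.toReal_nonneg
  set q : ℝ := (2:ℝ) ^ (-(1/h)) with hqdef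
  have hq_pos : 0 < q := Real.rpow_pos_of_pos h2 _
  have hq_half : 1/2 < q := by
    have h1 : (2:ℝ)^(-(1:ℝ)) < 2 ^ (-(1/h)) :=
      Real.rpow_lt_rpow_of_exponent_lt one_lt_two (by linarith)
    calc (1/2 : ℝ) = (2:ℝ)^(-(1:ℝ)) := by
          rw [Real.rpow_neg_one]; norm_num
      _ < q := h1
  have hq_lt1 : q < 1 := Real.rpow_lt_one_of_one_lt_of_neg one_lt_two (by linarith)
  have h2q1 : 0 < 2*q - 1 := by linarith
  set D : ℝ := (2*q)/(2*q-1) with hDdef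
  have hD_pos : 0 < D := div_pos (by linarith) h2q1
  have hlog2 : 0 < Real.log 2 := Real.log_pos one_lt_two
  have hlog2' : Real.log 2 < 1 := by
    have := Real.log_two_lt_d9; linarith
  set c1 : ℝ := 4*V/Real.log 2 with hc1def
  set c2 : ℝ := 8*A*D with hc2def
  have hc1_0 : 0 ≤ c1 := by positivity
  have hc2_0 : 0 < c2 := by positivity
  refine ⟨c1 + c2 + 1, by linarith, ?_⟩
  intro a M ha hM L hL
  have hL0 : (0:ℝ) < L := by linarith
  have hL1 : (1:ℝ) < L := by linarith
  have hM0 : 0 ≤ M := le_trans (abs_nonneg _) (hM 0)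
  have hlogL : 0 < Real.log L := Real.log_pos hL1
  set X : ℝ := L ^ (1/h) with hXdef
  have hX0 : 0 < X := Real.rpow_pos_of_pos hL0 _
  have hXL : X ≤ L := by
    calc X ≤ L ^ (1:ℝ) := Real.rpow_le_rpow_of_exponent_le hL1.le hinvh_lt1.le
      _ = L := Real.rpow_one L
  set g : ℝ × ℝ → ℝ := fun x => |a x| / (1 + L * |f x|) with hgdef
  have hden : ∀ x, (0:ℝ) < 1 + L * |f x| := by
    intro x; have := abs_nonneg (f x); nlinarith
  have hg0 : ∀ x, 0 ≤ g x := fun x => div_nonneg (abs_nonneg _) (hden x).le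
  have hgM : ∀ x, g x ≤ M := by
    intro x
    refine le_trans (div_le_self (abs_nonneg _) ?_) (hM x)
    have := abs_nonneg (f x); nlinarith
  have hgmeas : Measurable g :=
    (ha.abs).div ((measurable_const).add (measurable_const.mul hf.abs))
  set S : Set (ℝ×ℝ) := {x ∈ U | 1/L ≤ |f x|} with hSdef
  set E : ℕ → Set (ℝ×ℝ) := fun k => {x ∈ U | |f x| ≤ (1/2:ℝ)^k} with hEdef
  have hSU : S ⊆ U := fun x hx => hx.1
  have hEU : ∀ k, E k ⊆ U := fun k x hx => hx.1
  have hEmeas : ∀ k, MeasurableSet (E k) := fun k =>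
    hU.inter (measurableSet_le hf.abs measurable_const)
  have hSmeas : MeasurableSet S := hU.inter (measurableSet_le measurable_const hf.abs)
  have hEanti : ∀ {j k : ℕ}, j ≤ k → E k ⊆ E j := by
    intro j k hjk x hx
    exact ⟨hx.1, le_trans hx.2 (pow_le_pow_of_le_one (by norm_num) (by norm_num) hjk)⟩
  have hIntU : IntegrableOn g U := by
    refine Integrable.mono' ((integrableOn_const (ne_of_lt hUfin)) : IntegrableOn (fun _ => M) U volume) hgmeas.aestronglyMeasurable ?_
    exact Filter.Eventually.of_forall fun x => by
      rw [Real.norm_eq_abs, abs_of_nonneg (hg0 x)]; exact hgM x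
  set K : ℕ := ⌊Real.logb 2 L⌋₊ + 1 with hKdef
  have hlogb0 : 0 ≤ Real.logb 2 L := by
    apply Real.logb_nonneg one_lt_two (by linarith)
  have hlogb1 : 1 ≤ Real.logb 2 L := by
    rw [Real.logb, le_div_iff₀ hlog2, one_mul]
    exact Real.log_le_log (by norm_num) hL
  have h2K_L : L ≤ (2:ℝ)^K := by
    have h1 : Real.logb 2 L < (K:ℝ) := by
      have := Nat.lt_floor_add_one (Real.logb 2 L)
      push_cast [hKdef]
      linarith
    calc L = (2:ℝ) ^ (Real.logb 2 L) := (Real.rpow_logb h2 (by norm_num) hL0).symm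
      _ ≤ (2:ℝ) ^ ((K:ℝ)) := Real.rpow_le_rpow_of_exponent_le one_le_two h1.le
      _ = (2:ℝ)^K := Real.rpow_natCast 2 K
  have h2K_2L : (2:ℝ)^K ≤ 2*L := by
    have h1 : ((⌊Real.logb 2 L⌋₊ : ℝ)) ≤ Real.logb 2 L := Nat.floor_le hlogb0
    calc (2:ℝ)^K = 2 * (2:ℝ)^((⌊Real.logb 2 L⌋₊:ℝ)) := by
          rw [hKdef, pow_succ, Real.rpow_natCast]; ring
      _ ≤ 2 * (2:ℝ)^(Real.logb 2 L) := by
          have := Real.rpow_le_rpow_of_exponent_le one_le_two h1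
          linarith
      _ = 2 * L := by rw [Real.rpow_logb h2 (by norm_num) hL0]
  have hKlog : (K:ℝ) * Real.log 2 ≤ 2 * Real.log L := by
    have h1 : (K:ℝ) ≤ 2 * Real.logb 2 L := by
      have := Nat.floor_le hlogb0
      push_cast [hKdef]
      linarith
    have h2' : (K:ℝ) * Real.log 2 ≤ 2 * Real.logb 2 L * Real.log 2 :=
      mul_le_mul_of_nonneg_right h1 hlog2.le
    have h3' : Real.logb 2 L * Real.log 2 = Real.log L := by
      rw [Real.logb, div_mul_cancel₀ _ (ne_of_gt hlog2)]
    nlinarith [h2', h3']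
  -- the covering
  have hcover : S ⊆ (S \ E 2) ∪ ⋃ k ∈ Finset.Icc 2 K, (E k \ E (k+1)) := by
    intro x hx
    by_cases hx2 : x ∈ E 2
    · right
      have hfx0 : 0 < |f x| := lt_of_lt_of_le (by positivity) hx.2
      set y : ℝ := 1 / |f x| with hydef
      have hiff : ∀ (j:ℕ), (|f x| ≤ (1/2:ℝ)^j ↔ (2:ℝ)^j ≤ y) := by
        intro j
        rw [hydef, le_div_iff₀ hfx0]
        constructor
        · intro hle
          calc (2:ℝ)^j * |f x| ≤ (2:ℝ)^j * (1/2:ℝ)^j := by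
                have : (0:ℝ) ≤ (2:ℝ)^j := by positivity
                nlinarith
            _ = 1 := by rw [← mul_pow]; norm_num
        · intro hle
          calc |f x| = (1/2:ℝ)^j * ((2:ℝ)^j * |f x|) := by
                rw [← mul_assoc, ← mul_pow]; norm_num
            _ ≤ (1/2:ℝ)^j * 1 := by
                have : (0:ℝ) ≤ (1/2:ℝ)^j := by positivity
                nlinarith
            _ = (1/2:ℝ)^j := mul_one _
      have hy4 : 4 ≤ y := by
        have h1 : (2:ℝ)^2 ≤ y := (hiff 2).1 hx2.2
        norm_num at h1; linarith
      have hyL : y ≤ L := by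
        rw [hydef, div_le_iff₀ hfx0]
        have h1 := hx.2
        rw [div_le_iff₀ hL0] at h1
        nlinarith
      set k : ℕ := Nat.log 2 ⌊y⌋₊ with hkdef
      have hfl4 : 4 ≤ ⌊y⌋₊ := Nat.le_floor (by exact_mod_cast hy4)
      have hfl0 : ⌊y⌋₊ ≠ 0 := by omega
      have h1 : 2^k ≤ ⌊y⌋₊ := Nat.pow_log_le_self 2 hfl0
      have h2' : ⌊y⌋₊ < 2^(k+1) := Nat.lt_pow_succ_log_self (by norm_num) _
      have hk2 : 2 ≤ k := by
        by_contra hc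
        push_neg at hc
        interval_cases k <;> omega
      have hky : (2:ℝ)^k ≤ y := by
        have hcast : ((2^k:ℕ):ℝ) ≤ (⌊y⌋₊:ℝ) := by exact_mod_cast h1
        push_cast at hcast
        exact le_trans hcast (Nat.floor_le (by linarith))
      have hyk : y < (2:ℝ)^(k+1) := by
        have ha1 : y < (⌊y⌋₊:ℝ) + 1 := Nat.lt_floor_add_one y
        have ha2 : ((⌊y⌋₊:ℕ):ℝ) + 1 ≤ ((2:ℝ))^(k+1) := by
          have : (⌊y⌋₊:ℕ) + 1 ≤ 2^(k+1) := h2'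
          exact_mod_cast this
        linarith
      have hkK : k ≤ K := by
        by_contra hc
        push_neg at hc
        have hb1 : (2:ℝ)^K < (2:ℝ)^k := by
          exact pow_lt_pow_right₀ one_lt_two hc
        have hb2 : (2:ℝ)^k ≤ L := le_trans hky hyL
        linarith
      refine mem_iUnion₂.2 ⟨k, Finset.mem_Icc.2 ⟨hk2, hkK⟩, ⟨hx.1, (hiff k).2 hky⟩, ?_⟩
      intro hxE
      exact absurd ((hiff (k+1)).1 hxE.2) (not_le.2 hyk)
    · exact Or.inl ⟨hx, hx2⟩
  -- measurability and integrability of pieces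
  have hBmeas : MeasurableSet (⋃ k ∈ Finset.Icc 2 K, (E k \ E (k+1))) :=
    Finset.measurableSet_biUnion _ (fun k _ => (hEmeas k).diff (hEmeas (k+1)))
  have hIntT : IntegrableOn g (S \ E 2) := hIntU.mono_set (fun x hx => hSU hx.1)
  have hIntAnn : ∀ k, IntegrableOn g (E k \ E (k+1)) := fun k =>
    hIntU.mono_set (fun x hx => hEU k hx.1)
  have hIntB : IntegrableOn g (⋃ k ∈ Finset.Icc 2 K, (E k \ E (k+1))) := by
    apply hIntU.mono_set
    intro x hx
    obtain ⟨k, _, hk⟩ := mem_iUnion₂.1 hx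
    exact hEU k hk.1
  have hdisj : Disjoint (S \ E 2) (⋃ k ∈ Finset.Icc 2 K, (E k \ E (k+1))) := by
    rw [Set.disjoint_left]
    intro x hx hx'
    obtain ⟨k, hkmem, hk⟩ := mem_iUnion₂.1 hx'
    have hk2 : 2 ≤ k := (Finset.mem_Icc.1 hkmem).1
    exact hx.2 (hEanti hk2 hk.1)
  have hIntTB : IntegrableOn g ((S \ E 2) ∪ ⋃ k ∈ Finset.Icc 2 K, (E k \ E (k+1))) := by
    apply hIntU.mono_set
    intro x hx
    rcases hx with hx | hx
    · exact hSU hx.1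
    · obtain ⟨k, _, hk⟩ := mem_iUnion₂.1 hx
      exact hEU k hk.1
  have hann_disj : Set.Pairwise ↑(Finset.Icc 2 K)
      (Function.onFun Disjoint fun k => E k \ E (k+1)) := by
    intro i _ j _ hij
    have key : ∀ i j : ℕ, i < j → Disjoint (E i \ E (i+1)) (E j \ E (j+1)) := by
      intro i j hlt
      rw [Set.disjoint_left]
      intro x hx hx'
      exact hx.2 (hEanti hlt hx'.1)
    rcases lt_or_gt_of_ne hij with hlt | hlt
    · exact key i j hlt
    · exact (key j i hlt).symm
  -- step 1: monotonicity
  have hstep1 : ∫ x in S, g x ≤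
      ∫ x in (S \ E 2) ∪ ⋃ k ∈ Finset.Icc 2 K, (E k \ E (k+1)), g x := by
    apply setIntegral_mono_set hIntTB
    · exact Filter.Eventually.of_forall fun x => hg0 x
    · exact HasSubset.Subset.eventuallyLE hcover
  -- step 2: split
  have hstep2 : ∫ x in (S \ E 2) ∪ ⋃ k ∈ Finset.Icc 2 K, (E k \ E (k+1)), g x =
      (∫ x in S \ E 2, g x) + ∑ k ∈ Finset.Icc 2 K, ∫ x in E k \ E (k+1), g x := by
    rw [setIntegral_union hdisj hBmeas hIntT hIntB,
      integral_biUnion_finset _ (fun k _ => (hEmeas k).diff (hEmeas (k+1))) hann_disj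
        (fun k _ => hIntAnn k)]
  -- bound on the outer piece
  have hterm1 : ∫ x in S \ E 2, g x ≤ 4*M*V/L := by
    have hpt : ∀ x ∈ S \ E 2, ‖g x‖ ≤ 4*M/L := by
      intro x hx
      have hfx : (1/2:ℝ)^2 < |f x| := by
        by_contra hc
        push_neg at hc
        exact hx.2 ⟨hx.1.1, hc⟩
      rw [Real.norm_eq_abs, abs_of_nonneg (hg0 x)]
      have hden' : L/4 ≤ 1 + L*|f x| := by nlinarith
      have hL4 : (0:ℝ) < L/4 := by linarith
      calc g x ≤ |a x| / (L/4) :=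
            div_le_div_of_nonneg_left (abs_nonneg _) hL4 hden'
        _ ≤ M / (L/4) := by
            rw [div_eq_mul_inv, div_eq_mul_inv]
            exact mul_le_mul_of_nonneg_right (hM x) (by positivity)
        _ = 4*M/L := by field_simp
    have hfin : volume (S \ E 2) < ⊤ :=
      lt_of_le_of_lt (measure_mono (fun x hx => hSU hx.1)) hUfin
    have hnorm := norm_setIntegral_le_of_norm_le_const hfin hpt
    have hvol : (volume (S \ E 2)).toReal ≤ V :=
      ENNReal.toReal_mono (ne_of_lt hUfin) (measure_mono (fun x hx => hSU hx.1))
    calc ∫ x in S \ E 2, g x ≤ ‖∫ x in S \ E 2, g x‖ := le_abs_self _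
      _ ≤ (4*M/L) * (volume (S \ E 2)).toReal := hnorm
      _ ≤ (4*M/L) * V := by
          apply mul_le_mul_of_nonneg_left hvol
          positivity
      _ = 4*M*V/L := by ring
    -- bound on each annulus
  have hannbound : ∀ k ∈ Finset.Icc 2 K, ∫ x in E k \ E (k+1), g x ≤
      (2*M*A/L) * (((K:ℝ)*Real.log 2)^m * (2*q)^k) := by
    intro k hk
    obtain ⟨hk2, hkK⟩ := Finset.mem_Icc.1 hk
    have hpt : ∀ x ∈ E k \ E (k+1), ‖g x‖ ≤ M * 2^(k+1) / L := by
      intro x hx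
      have hfx : (1/2:ℝ)^(k+1) < |f x| := by
        by_contra hc
        push_neg at hc
        exact hx.2 ⟨hx.1.1, hc⟩
      rw [Real.norm_eq_abs, abs_of_nonneg (hg0 x)]
      have hp1 : (0:ℝ) < (1/2:ℝ)^(k+1) := by positivity
      have hden' : L * (1/2:ℝ)^(k+1) ≤ 1 + L*|f x| := by nlinarith
      have hLp : (0:ℝ) < L * (1/2:ℝ)^(k+1) := by positivity
      calc g x ≤ |a x| / (L * (1/2:ℝ)^(k+1)) :=
            div_le_div_of_nonneg_left (abs_nonneg _) hLp hden'
        _ ≤ M / (L * (1/2:ℝ)^(k+1)) := by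
            rw [div_eq_mul_inv, div_eq_mul_inv]
            exact mul_le_mul_of_nonneg_right (hM x) (by positivity)
        _ = M * 2^(k+1) / L := by
            rw [div_eq_div_iff hLp.ne' hL0.ne']
            have h21 : (2:ℝ)^(k+1) * (1/2:ℝ)^(k+1) = 1 := by
              rw [← mul_pow]; norm_num
            linear_combination (-(M * L)) * h21
    have hfin : volume (E k \ E (k+1)) < ⊤ :=
      lt_of_le_of_lt (measure_mono (fun x hx => hEU k hx.1)) hUfin
    have hnorm := norm_setIntegral_le_of_norm_le_const hfin
      hpt
    -- measure of the annulus
    have hEfin : volume (E k) ≠ ⊤ :=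
      ne_of_lt (lt_of_le_of_lt (measure_mono (hEU k)) hUfin)
    have htIoo : (1/2:ℝ)^k ∈ Ioo (0:ℝ) (1/2) := by
      constructor
      · positivity
      · calc (1/2:ℝ)^k ≤ (1/2:ℝ)^2 :=
              pow_le_pow_of_le_one (by norm_num) (by norm_num) hk2
          _ < 1/2 := by norm_num
    have hrw1 : ((1/2:ℝ)^k) ^ (1/h) = q^k := by
      have e1 : (1/2:ℝ)^k = (2:ℝ)^(-(k:ℝ)) := by
        rw [Real.rpow_neg (by norm_num), Real.rpow_natCast, ← inv_pow, one_div]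
      rw [e1, ← Real.rpow_natCast q k, hqdef, ← Real.rpow_mul (by norm_num),
        ← Real.rpow_mul (by norm_num)]
      congr 1
      ring
    have hrw2 : |Real.log ((1/2:ℝ)^k)| = (k:ℝ) * Real.log 2 := by
      rw [Real.log_pow, one_div, Real.log_inv, mul_neg, abs_neg, abs_mul,
        Nat.abs_cast, abs_of_nonneg hlog2.le]
    have hvolE : (volume (E k)).toReal ≤ A * q^k * ((k:ℝ)*Real.log 2)^m := by
      have := hsub ((1/2)^k) htIoo
      rw [hrw1, hrw2] at this
      exact this
    have hvolAnn : (volume (E k \ E (k+1))).toReal ≤ A * q^k * ((k:ℝ)*Real.log 2)^m :=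
      le_trans (ENNReal.toReal_mono hEfin (measure_mono diff_subset)) hvolE
    have hklog : ((k:ℝ)*Real.log 2)^m ≤ ((K:ℝ)*Real.log 2)^m := by
      apply pow_le_pow_left₀ (by positivity)
      have : (k:ℝ) ≤ (K:ℝ) := by exact_mod_cast hkK
      nlinarith
    calc ∫ x in E k \ E (k+1), g x ≤ ‖∫ x in E k \ E (k+1), g x‖ := le_abs_self _
      _ ≤ (M * 2^(k+1) / L) * (volume (E k \ E (k+1))).toReal := hnorm
      _ ≤ (M * 2^(k+1) / L) * (A * q^k * ((K:ℝ)*Real.log 2)^m) := by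
          apply mul_le_mul_of_nonneg_left _ (by positivity)
          refine le_trans hvolAnn ?_
          apply mul_le_mul_of_nonneg_left hklog (by positivity)
      _ = (2*M*A/L) * (((K:ℝ)*Real.log 2)^m * (2*q)^k) := by
          rw [mul_pow, pow_succ]
          ring
  -- sum the bounds
  have hgeom : ∑ k ∈ Finset.Icc 2 K, (2*q)^k ≤ (2*q)^(K+1) / (2*q-1) := by
    have hsub' : Finset.Icc 2 K ⊆ Finset.range (K+1) := by
      intro k hk
      rw [Finset.mem_range]
      exact Nat.lt_succ_of_le (Finset.mem_Icc.1 hk).2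
    have h1 : ∑ k ∈ Finset.Icc 2 K, (2*q)^k ≤ ∑ k ∈ Finset.range (K+1), (2*q)^k :=
      Finset.sum_le_sum_of_subset_of_nonneg hsub' (fun k _ _ => by positivity)
    have h2' : ∑ k ∈ Finset.range (K+1), (2*q)^k = ((2*q)^(K+1) - 1)/(2*q - 1) :=
      geom_sum_eq (by intro hc; rw [hc] at h2q1; norm_num at h2q1) (K+1)
    have h3 : ((2*q)^(K+1) - 1)/(2*q - 1) ≤ (2*q)^(K+1)/(2*q-1) := by
      rw [div_eq_mul_inv, div_eq_mul_inv]
      exact mul_le_mul_of_nonneg_right (by linarith) (inv_nonneg.2 h2q1.le)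
    linarith [h1, h2'.le, h2'.ge, h3]
  have hdivmono : ∀ {u v w : ℝ}, 0 < w → u ≤ v → u / w ≤ v / w := by
    intro u v w hw huv
    rw [div_eq_mul_inv, div_eq_mul_inv]
    exact mul_le_mul_of_nonneg_right huv (inv_nonneg.2 hw.le)
  -- q^K ≤ 1/X
  set P : ℝ := (2:ℝ)^((1:ℝ)/h) with hPdef
  have hP0 : 0 < P := Real.rpow_pos_of_pos h2 _
  have hqP : q = P⁻¹ := by rw [hqdef, hPdef, Real.rpow_neg h2.le]
  have hPK : X ≤ P^K := by
    have e1 : P^K = ((2:ℝ)^K)^(1/h) := by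
      rw [← Real.rpow_natCast P K, hPdef, ← Real.rpow_natCast (2:ℝ) K,
        ← Real.rpow_mul h2.le, ← Real.rpow_mul h2.le]
      congr 1
      ring
    rw [hXdef, e1]
    exact Real.rpow_le_rpow hL0.le h2K_L hinvh_pos.le
  have hqK : q^K ≤ 1/X := by
    rw [hqP, inv_pow, one_div]
    exact inv_anti₀ hX0 hPK
  have hsumtotal : ∑ k ∈ Finset.Icc 2 K, ∫ x in E k \ E (k+1), g x ≤
      c2 * M * (Real.log L)^m / X := by
    have h1 : ∑ k ∈ Finset.Icc 2 K, ∫ x in E k \ E (k+1), g x ≤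
        ∑ k ∈ Finset.Icc 2 K, (2*M*A/L) * (((K:ℝ)*Real.log 2)^m * (2*q)^k) :=
      Finset.sum_le_sum hannbound
    have h2' : ∑ k ∈ Finset.Icc 2 K, (2*M*A/L) * (((K:ℝ)*Real.log 2)^m * (2*q)^k)
        = (2*M*A/L) * ((K:ℝ)*Real.log 2)^m * ∑ k ∈ Finset.Icc 2 K, (2*q)^k := by
      rw [Finset.mul_sum]
      apply Finset.sum_congr rfl
      intro k _
      ring
    have hKm : ((K:ℝ)*Real.log 2)^m ≤ 2 * (Real.log L)^m := by
      have ha1 : ((K:ℝ)*Real.log 2)^m ≤ (2*Real.log L)^m :=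
        pow_le_pow_left₀ (by positivity) hKlog m
      have ha2 : (2*Real.log L)^m = 2^m * (Real.log L)^m := mul_pow 2 _ m
      have ha3 : (2:ℝ)^m ≤ 2 := by rcases hm with rfl | rfl <;> norm_num
      nlinarith [pow_nonneg hlogL.le m, ha1]
    have hpow : (2*q)^(K+1) ≤ (2*q) * ((2*L) * (1/X)) := by
      have e1 : (2*q)^(K+1) = (2*q) * ((2:ℝ)^K * q^K) := by
        rw [pow_succ, mul_pow]; ring
      rw [e1]
      apply mul_le_mul_of_nonneg_left _ (by positivity)
      apply mul_le_mul h2K_2L hqK (by positivity) (by linarith)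
    calc ∑ k ∈ Finset.Icc 2 K, ∫ x in E k \ E (k+1), g x
        ≤ (2*M*A/L) * ((K:ℝ)*Real.log 2)^m * ∑ k ∈ Finset.Icc 2 K, (2*q)^k := by
          rw [← h2']; exact h1
      _ ≤ (2*M*A/L) * ((K:ℝ)*Real.log 2)^m * ((2*q)^(K+1)/(2*q-1)) :=
          mul_le_mul_of_nonneg_left hgeom (by positivity)
      _ ≤ (2*M*A/L) * (2 * (Real.log L)^m) * ((2*q)^(K+1)/(2*q-1)) := by
          apply mul_le_mul_of_nonneg_right _ (by positivity)
          exact mul_le_mul_of_nonneg_left hKm (by positivity)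
      _ ≤ (2*M*A/L) * (2 * (Real.log L)^m) * (((2*q) * ((2*L) * (1/X)))/(2*q-1)) := by
          apply mul_le_mul_of_nonneg_left _ (by positivity)
          exact hdivmono h2q1 hpow
      _ = c2 * M * (Real.log L)^m / X := by
          rw [hc2def, hDdef]
          field_simp [hL0.ne', hX0.ne', h2q1.ne']
          ring
  -- outer piece comparison
  have hterm1' : 4*M*V/L ≤ c1 * M * (Real.log L)^m / X := by
    have hlogm : Real.log 2 ≤ (Real.log L)^m := by
      have h1 : Real.log 2 ≤ Real.log L := by
        apply Real.log_le_log (by norm_num) hL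
      rcases hm with rfl | rfl
      · simpa using hlog2'.le
      · simpa using h1
    have hb1 : 4*M*V/L ≤ 4*M*V/X := div_le_div_of_nonneg_left (by positivity) hX0 hXL
    have hb2 : 4*M*V ≤ c1 * M * (Real.log L)^m := by
      rw [hc1def, div_mul_eq_mul_div, div_mul_eq_mul_div, le_div_iff₀ hlog2]
      have hk1 : 0 ≤ M * V * ((Real.log L)^m - Real.log 2) :=
        mul_nonneg (mul_nonneg hM0 hV0) (sub_nonneg.2 hlogm)
      linarith only [hk1]
    exact le_trans hb1 (hdivmono hX0 hb2)
  -- final assembly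
  have hY : 0 ≤ M*(Real.log L)^m/X := by positivity
  calc ∫ x in S, g x
      ≤ ∫ x in (S \ E 2) ∪ ⋃ k ∈ Finset.Icc 2 K, (E k \ E (k+1)), g x := hstep1
    _ = (∫ x in S \ E 2, g x) + ∑ k ∈ Finset.Icc 2 K, ∫ x in E k \ E (k+1), g x := hstep2
    _ ≤ 4*M*V/L + c2 * M * (Real.log L)^m / X := add_le_add hterm1 hsumtotal
    _ ≤ c1 * M * (Real.log L)^m / X + c2 * M * (Real.log L)^m / X := by linarith
    _ ≤ (c1 + c2 + 1) * M * (Real.log L)^m / X := by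
        have e1 : c1 * M * (Real.log L)^m / X + c2 * M * (Real.log L)^m / X
            = (c1 + c2) * (M * (Real.log L)^m / X) := by ring
        have e2 : (c1 + c2 + 1) * M * (Real.log L)^m / X
            = (c1 + c2) * (M * (Real.log L)^m / X) + (M * (Real.log L)^m / X) := by ring
        rw [e1, e2]
        linarith
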